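/- Every R-module embeds into a Q-copure Baer injective R-module. -/

import Mathlib

universe u

variable {R : Type u}

/-- A linear map `f : A → B` is `Q`-copure if every module in `Q` is injective
relative to `f`. -/
def IsCopure [Ring R] (Q : ModuleCat.{u} R → Prop) {A B : Type u}
    [AddCommGroup A] [Module R A] [AddCommGroup B] [Module R B] (f : A →ₗ[R] B) : Prop :=
  ∀ M : ModuleCat.{u} R, Q M → ∀ g : A →ₗ[R] M, ∃ h : B →ₗ[R] M, ∀ a : A, h (f a) = g a

/-- A left ideal `I` of `R` is `Q`-copure if every module in `Q` is injective
relative to the inclusion `I → R`. -/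
def CopureIdeal [Ring R] (Q : ModuleCat.{u} R → Prop) (I : Ideal R) : Prop :=
  ∀ M : ModuleCat.{u} R, Q M → ∀ g : I →ₗ[R] M, ∃ h : R →ₗ[R] M, ∀ x : I, h x = g x

/-- `N` is `Q`-copure Baer injective if every homomorphism from a `Q`-copure
left ideal of `R` into `N` extends to `R`. -/
def CopureBaerInjective [Ring R] (Q : ModuleCat.{u} R → Prop) (N : Type*)
    [AddCommGroup N] [Module R N] : Prop :=
  ∀ I : Ideal R, CopureIdeal Q I → ∀ g : I →ₗ[R] N, ∃ h : R →ₗ[R] N, ∀ x : I, h x = g x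

theorem embed_in_copureBaerInjective [Ring R] (Q : ModuleCat.{u} R → Prop)
    (A : Type u) [AddCommGroup A] [Module R A] :
    ∃ (B : ModuleCat.{u} R) (f : A →ₗ[R] B), Function.Injective f ∧
      CopureBaerInjective Q B := by
  classical
  let A' : ModuleCat.{u} R := ModuleCat.of R A
  let B := CategoryTheory.Injective.under A'
  let ι : A' ⟶ B := CategoryTheory.Injective.ι A'
  have hmono : Function.Injective ι := by
    rw [← ModuleCat.mono_iff_injective]; infer_instance
  have hBinj : CategoryTheory.Injective (ModuleCat.of R B) :=
    CategoryTheory.Injective.injective_under A'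
  have hinj : Module.Injective R B :=
    Module.injective_module_of_injective_object R B
  refine ⟨B, ι.hom, hmono, ?_⟩
  intro I _ g
  obtain ⟨h, hh⟩ := hinj.out I.subtype Subtype.val_injective g
  exact ⟨h, fun x => hh x⟩
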